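/- Let 0 < α ≤ 1, σ > 1, ν > 1, M₁ > 0, and M₂ > 0 be real numbers with M₂ ≥ ν M₁. Then there exists a constant A > 0, depending only on α, ν, and σ, such that ( ∫_{M₁}^{M₂} ψ_σ(s)^{−α} s^{α−1} ds )^{1/α} ≥ A ∫_{M₁}^{M₂} ds / ψ(s) for every measurable function ψ : (0,∞) → (0,∞) such that ψ_σ(s) > 0 for all s ∈ (0,∞). -/

import Mathlib

open Set Filter MeasureTheory

noncomputable section

namespace Lemma35Aux

variable {ψ : ℝ → ℝ} {σ α : ℝ}

lemma window_mem_pos (hσ : 1 < σ) {s z : ℝ} (hz : z ∈ Ioo (s/σ) (σ*s)) : 0 < z := by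
  obtain ⟨h1, h2⟩ := hz
  have hσ0 : (0:ℝ) < σ := by linarith
  rw [div_lt_iff₀ hσ0] at h1
  by_contra h0
  push_neg at h0
  have h3 : σ * z ≤ 1 * z := mul_le_mul_of_nonpos_right hσ.le h0
  have h4 : s < σ * s := by nlinarith
  nlinarith

lemma window_self (hσ : 1 < σ) {s : ℝ} (hs : 0 < s) : s ∈ Ioo (s/σ) (σ*s) := by
  have hσ0 : (0:ℝ) < σ := by linarith
  constructor
  · rw [div_lt_iff₀ hσ0]; nlinarith
  · nlinarith

lemma window_symm (hσ : 1 < σ) {s ζ : ℝ} (h : ζ ∈ Ioo (s/σ) (σ*s)) : s ∈ Ioo (ζ/σ) (σ*ζ) := by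
  have hσ0 : (0:ℝ) < σ := by linarith
  obtain ⟨h1, h2⟩ := h
  rw [div_lt_iff₀ hσ0] at h1
  constructor
  · rw [div_lt_iff₀ hσ0]; linarith
  · linarith

lemma bdd_below_image (hσ : 1 < σ) (hψ : ∀ s : ℝ, 0 < s → 0 < ψ s) (s : ℝ) :
    BddBelow (ψ '' Ioo (s/σ) (σ*s)) := by
  refine ⟨0, ?_⟩
  rintro x ⟨z, hz, rfl⟩
  exact (hψ z (window_mem_pos hσ hz)).le

lemma inf_le (hσ : 1 < σ) (hψ : ∀ s : ℝ, 0 < s → 0 < ψ s) {s ζ : ℝ}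
    (hζ : ζ ∈ Ioo (s/σ) (σ*s)) : sInf (ψ '' Ioo (s/σ) (σ*s)) ≤ ψ ζ :=
  csInf_le (bdd_below_image hσ hψ s) ⟨ζ, hζ, rfl⟩

lemma inf_nonneg (hσ : 1 < σ) (hψ : ∀ s : ℝ, 0 < s → 0 < ψ s) (s : ℝ) :
    0 ≤ sInf (ψ '' Ioo (s/σ) (σ*s)) := by
  apply Real.sInf_nonneg
  rintro x ⟨z, hz, rfl⟩
  exact (hψ z (window_mem_pos hσ hz)).le

lemma window_empty (hσ : 1 < σ) {s : ℝ} (hs : s ≤ 0) : Ioo (s/σ) (σ*s) = ∅ := by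
  have hσ0 : (0:ℝ) < σ := by linarith
  apply Ioo_eq_empty
  intro h
  obtain ⟨z, hz⟩ := nonempty_Ioo.mpr h
  have := window_mem_pos hσ hz
  nlinarith [hz.2]

lemma measurable_Phi (hσ : 1 < σ) (hψ : ∀ s : ℝ, 0 < s → 0 < ψ s) :
    Measurable (fun s => sInf (ψ '' Ioo (s/σ) (σ*s))) := by
  apply measurable_of_Iio
  intro c
  have hset : (fun s => sInf (ψ '' Ioo (s/σ) (σ*s))) ⁻¹' Iio c =
      (⋃ ζ ∈ {z : ℝ | 0 < z ∧ ψ z < c}, Ioo (ζ/σ) (σ*ζ)) ∪ {s : ℝ | s ≤ 0 ∧ 0 < c} := by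
    ext s
    simp only [mem_preimage, mem_Iio, mem_union, mem_iUnion, mem_setOf_eq, exists_prop]
    constructor
    · intro h
      rcases le_or_gt s 0 with hs | hs
      · right
        refine ⟨hs, ?_⟩
        rwa [window_empty hσ hs, image_empty, Real.sInf_empty] at h
      · left
        have hne : (ψ '' Ioo (s/σ) (σ*s)).Nonempty := ⟨ψ s, ⟨s, window_self hσ hs, rfl⟩⟩
        obtain ⟨x, ⟨ζ, hζ, rfl⟩, hxc⟩ := (csInf_lt_iff (bdd_below_image hσ hψ s) hne).mp h
        exact ⟨ζ, ⟨window_mem_pos hσ hζ, hxc⟩, window_symm hσ hζ⟩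
    · rintro (⟨ζ, ⟨hζ0, hζc⟩, hsζ⟩ | ⟨hs, hc⟩)
      · exact lt_of_le_of_lt (inf_le hσ hψ (window_symm hσ hsζ)) hζc
      · rw [window_empty hσ hs, image_empty, Real.sInf_empty]; exact hc
  rw [hset]
  apply MeasurableSet.union
  · exact (isOpen_biUnion fun ζ _ => isOpen_Ioo).measurableSet
  · by_cases hc : 0 < c
    · simp only [hc, and_true]
      exact measurableSet_Iic
    · convert MeasurableSet.empty
      simp only [eq_empty_iff_forall_notMem, mem_setOf_eq, not_and]
      exact fun s _ => hc

lemma Phi_pos_lb (hσ : 1 < σ) (hψ : ∀ s : ℝ, 0 < s → 0 < ψ s)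
    (hΦ : ∀ s : ℝ, 0 < s → 0 < sInf (ψ '' Ioo (s/σ) (σ*s)))
    {a b : ℝ} (ha : 0 < a) :
    ∃ m > 0, ∀ s ∈ Icc a b, m ≤ sInf (ψ '' Ioo (s/σ) (σ*s)) := by
  rcases le_or_gt a b with hab | hab
  swap
  · exact ⟨1, one_pos, fun s hs => absurd (hs.1.trans hs.2) (not_le.mpr hab)⟩
  have hσ0 : (0:ℝ) < σ := by linarith
  set τ := Real.sqrt σ with hτdef
  have hττ : τ * τ = σ := Real.mul_self_sqrt hσ0.le
  have hτ1 : 1 < τ := by nlinarith [Real.sqrt_nonneg σ]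
  have hτ0 : (0:ℝ) < τ := by linarith
  -- local bound
  have key : ∀ t ∈ Icc a b, ∀ s ∈ Ioo (t/τ) (τ*t),
      min (sInf (ψ '' Ioo ((t/τ)/σ) (σ*(t/τ)))) (sInf (ψ '' Ioo ((τ*t)/σ) (σ*(τ*t)))) ≤
        sInf (ψ '' Ioo (s/σ) (σ*s)) := by
    intro t ht s hs
    have ht0 : 0 < t := lt_of_lt_of_le ha ht.1
    have hs0 : 0 < s := lt_trans (by positivity) hs.1
    apply le_csInf (Set.Nonempty.image ψ ⟨s, window_self hσ hs0⟩)
    rintro x ⟨ζ, hζ, rfl⟩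
    have hζ1 : s / σ < ζ := hζ.1
    have hζ2 : ζ < σ * s := hζ.2
    have hst1 : t/τ < s := hs.1
    have hst2 : s < τ*t := hs.2
    rcases lt_or_ge ζ (σ*(t/τ)) with hcase | hcase
    · refine le_trans (min_le_left _ _) (inf_le hσ hψ ⟨?_, hcase⟩)
      -- (t/τ)/σ < ζ
      calc t/τ/σ < s/σ := by gcongr
        _ < ζ := hζ1
    · refine le_trans (min_le_right _ _) (inf_le hσ hψ ⟨?_, ?_⟩)
      · -- (τ*t)/σ < ζ : since (τ*t)/σ < σ*(t/τ) ≤ ζ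
        refine lt_of_lt_of_le ?_ hcase
        rw [show σ*(t/τ) = σ*t/τ by ring, div_lt_div_iff₀ hσ0 hτ0]
        nlinarith [mul_pos (mul_pos hσ0 ht0) (sub_pos.mpr hσ)]
      · calc ζ < σ * s := hζ2
          _ < σ * (τ*t) := by nlinarith
  -- compactness
  obtain ⟨T, hTmem, hTcov⟩ := (isCompact_Icc (a := a) (b := b)).elim_nhds_subcover
      (fun t => Ioo (t/τ) (τ*t)) (fun t ht => by
        have ht0 : 0 < t := lt_of_lt_of_le ha ht.1
        refine IsOpen.mem_nhds isOpen_Ioo ⟨?_, ?_⟩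
        · rw [div_lt_iff₀ hτ0]; nlinarith
        · nlinarith)
  have hTne : T.Nonempty := by
    rcases Finset.eq_empty_or_nonempty T with rfl | h
    · exfalso
      have := hTcov (left_mem_Icc.mpr hab)
      simpa using this
    · exact h
  refine ⟨T.inf' hTne (fun t =>
      min (sInf (ψ '' Ioo ((t/τ)/σ) (σ*(t/τ)))) (sInf (ψ '' Ioo ((τ*t)/σ) (σ*(τ*t))))), ?_, ?_⟩
  · show (0:ℝ) < _
    rw [Finset.lt_inf'_iff]
    intro t ht
    have ht0 : 0 < t := lt_of_lt_of_le ha (hTmem t ht).1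
    exact lt_min (hΦ _ (by positivity)) (hΦ _ (by positivity))
  · intro s hs
    have := hTcov hs
    simp only [mem_iUnion, exists_prop] at this
    obtain ⟨t, htT, hst⟩ := this
    exact le_trans (Finset.inf'_le _ htT) (key t (hTmem t htT) s hst)

lemma rpow_add_le (h0 : 0 ≤ α) (h1 : α ≤ 1) {x y : ℝ} (hx : 0 ≤ x) (hy : 0 ≤ y) :
    (x + y) ^ α ≤ x ^ α + y ^ α := by
  have h := NNReal.rpow_add_le_add_rpow (Real.toNNReal x) (Real.toNNReal y) h0 h1
  have h' := NNReal.coe_le_coe.mpr h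
  push_cast [NNReal.coe_rpow] at h'
  rwa [Real.coe_toNNReal x hx, Real.coe_toNNReal y hy] at h'

lemma sum_rpow_le (h0 : 0 < α) (h1 : α ≤ 1) (n : ℕ) (f : ℕ → ℝ) (hf : ∀ k, 0 ≤ f k) :
    (∑ k ∈ Finset.range n, f k) ^ α ≤ ∑ k ∈ Finset.range n, f k ^ α := by
  induction n with
  | zero => simp [Real.zero_rpow h0.ne']
  | succ n ih =>
    rw [Finset.sum_range_succ, Finset.sum_range_succ]
    calc (∑ k ∈ Finset.range n, f k + f n) ^ α
        ≤ (∑ k ∈ Finset.range n, f k) ^ α + f n ^ α :=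
          rpow_add_le h0.le h1 (Finset.sum_nonneg fun k _ => hf k) (hf n)
      _ ≤ ∑ k ∈ Finset.range n, f k ^ α + f n ^ α := by linarith

lemma integrable_weight (hσ : 1 < σ) (h0α : 0 < α) (hα1 : α ≤ 1) (hψm : Measurable ψ)
    (hψ : ∀ s : ℝ, 0 < s → 0 < ψ s)
    (hΦ : ∀ s : ℝ, 0 < s → 0 < sInf (ψ '' Ioo (s/σ) (σ*s)))
    {a b : ℝ} (ha : 0 < a) (hab : a ≤ b) :
    IntervalIntegrable (fun s => sInf (ψ '' Ioo (s/σ) (σ*s)) ^ (-α) * s ^ (α-1)) volume a b := by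
  obtain ⟨m, hm0, hm⟩ := Phi_pos_lb hσ hψ hΦ (b := b) ha
  rw [intervalIntegrable_iff_integrableOn_Icc_of_le hab]
  apply Integrable.mono' (g := fun _ => m^(-α) * a^(α-1))
  · exact (integrableOn_const_iff).mpr (Or.inr measure_Icc_lt_top)
  · exact (((measurable_Phi hσ hψ).pow measurable_const).mul
      (measurable_id.pow measurable_const)).aestronglyMeasurable.restrict
  · refine (ae_restrict_iff' measurableSet_Icc).mpr (ae_of_all _ fun s hs => ?_)
    have hs0 : 0 < s := lt_of_lt_of_le ha hs.1
    have h1 : sInf (ψ '' Ioo (s/σ) (σ*s)) ^ (-α) ≤ m ^ (-α) :=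
      Real.rpow_le_rpow_of_nonpos hm0 (hm s hs) (by linarith)
    have h2 : s ^ (α-1) ≤ a ^ (α-1) :=
      Real.rpow_le_rpow_of_nonpos ha hs.1 (by linarith)
    have hn1 : (0:ℝ) ≤ sInf (ψ '' Ioo (s/σ) (σ*s)) ^ (-α) := Real.rpow_nonneg (inf_nonneg hσ hψ s) _
    have hn2 : (0:ℝ) ≤ s ^ (α-1) := Real.rpow_nonneg hs0.le _
    rw [Real.norm_eq_abs, abs_of_nonneg (mul_nonneg hn1 hn2)]
    exact mul_le_mul h1 h2 hn2 (Real.rpow_nonneg hm0.le _)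

lemma chunk (hσ : 1 < σ) (h0α : 0 < α) (hα1 : α ≤ 1) (hψm : Measurable ψ)
    (hψ : ∀ s : ℝ, 0 < s → 0 < ψ s)
    (hΦ : ∀ s : ℝ, 0 < s → 0 < sInf (ψ '' Ioo (s/σ) (σ*s)))
    {ρ a r : ℝ} (ha : 0 < a) (hρ1 : 1 < ρ) (hρr : ρ ≤ r) (hrσ : r < σ)
    (hint : IntervalIntegrable (fun s => (ψ s)⁻¹) volume a (r*a)) :
    (ρ^α - 1)/(α * (σ-1)^α) * (∫ s in a..r*a, (ψ s)⁻¹)^α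
      ≤ ∫ s in a..r*a, sInf (ψ '' Ioo (s/σ) (σ*s)) ^ (-α) * s^(α-1) := by
  have hr1 : 1 < r := lt_of_lt_of_le hρ1 hρr
  set b := r*a with hbdef
  have hab : a < b := by rw [hbdef]; nlinarith
  have hbσa : b < σ*a := by rw [hbdef]; nlinarith
  set K := ∫ s in a..b, (ψ s)⁻¹ with hKdef
  have hK0 : 0 ≤ K := intervalIntegral.integral_nonneg hab.le
    (fun u hu => (inv_nonneg).mpr (hψ u (lt_of_lt_of_le ha hu.1)).le)
  have hw := integrable_weight hσ h0α hα1 hψm hψ hΦ ha hab.le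
  have hRHS0 : 0 ≤ ∫ s in a..b, sInf (ψ '' Ioo (s/σ) (σ*s)) ^ (-α) * s^(α-1) :=
    intervalIntegral.integral_nonneg hab.le (fun u hu =>
      mul_nonneg (Real.rpow_nonneg (inf_nonneg hσ hψ u) _)
        (Real.rpow_nonneg (lt_of_lt_of_le ha hu.1).le _))
  rcases hK0.eq_or_lt with hK | hK
  · rw [← hK, Real.zero_rpow h0α.ne', mul_zero]
    exact hRHS0
  -- main case
  have step1 : ∀ s ∈ Icc a b, ∀ ζ ∈ Icc a b, sInf (ψ '' Ioo (s/σ) (σ*s)) ≤ ψ ζ := by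
    intro s hs ζ hζ
    apply inf_le hσ hψ
    constructor
    · calc s/σ ≤ b/σ := by gcongr; exact hs.2
        _ < a := by rw [div_lt_iff₀ (by linarith : (0:ℝ) < σ)]; nlinarith
        _ ≤ ζ := hζ.1
    · calc ζ ≤ b := hζ.2
        _ < σ*a := hbσa
        _ ≤ σ*s := by nlinarith [hs.1]
  have step2 : ∀ s ∈ Icc a b, K ≤ (b - a) * (sInf (ψ '' Ioo (s/σ) (σ*s)))⁻¹ := by
    intro s hs
    have hΦs : 0 < sInf (ψ '' Ioo (s/σ) (σ*s)) := hΦ s (lt_of_lt_of_le ha hs.1)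
    have h1 : K ≤ ∫ _ζ in a..b, (sInf (ψ '' Ioo (s/σ) (σ*s)))⁻¹ := by
      apply intervalIntegral.integral_mono_on hab.le hint intervalIntegrable_const
      intro ζ hζ
      exact inv_anti₀ hΦs (step1 s hs ζ hζ)
    rwa [intervalIntegral.integral_const, smul_eq_mul] at h1
  have step3 : ∀ s ∈ Icc a b, (K/(b-a))^α ≤ sInf (ψ '' Ioo (s/σ) (σ*s)) ^ (-α) := by
    intro s hs
    have hΦs : 0 < sInf (ψ '' Ioo (s/σ) (σ*s)) := hΦ s (lt_of_lt_of_le ha hs.1)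
    have hba0 : (0:ℝ) < b - a := by linarith
    have hle : sInf (ψ '' Ioo (s/σ) (σ*s)) ≤ (b-a)/K := by
      rw [le_div_iff₀ hK]
      have h2 := mul_le_mul_of_nonneg_left (step2 s hs) hΦs.le
      rwa [show sInf (ψ '' Ioo (s/σ) (σ*s)) * ((b-a) * (sInf (ψ '' Ioo (s/σ) (σ*s)))⁻¹)
          = (b-a) * (sInf (ψ '' Ioo (s/σ) (σ*s)) * (sInf (ψ '' Ioo (s/σ) (σ*s)))⁻¹) by ring,
        mul_inv_cancel₀ hΦs.ne', mul_one] at h2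
    calc (K/(b-a))^α = (((b-a)/K)⁻¹)^α := by rw [inv_div]
      _ = (((b-a)/K)^α)⁻¹ := Real.inv_rpow (by positivity) α
      _ ≤ ((sInf (ψ '' Ioo (s/σ) (σ*s)))^α)⁻¹ :=
          inv_anti₀ (Real.rpow_pos_of_pos hΦs α) (Real.rpow_le_rpow hΦs.le hle h0α.le)
      _ = sInf (ψ '' Ioo (s/σ) (σ*s)) ^ (-α) := (Real.rpow_neg (inf_nonneg hσ hψ s) α).symm
  have step4 : ∫ s in a..b, (K/(b-a))^α * s^(α-1)
      ≤ ∫ s in a..b, sInf (ψ '' Ioo (s/σ) (σ*s)) ^ (-α) * s^(α-1) := by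
    apply intervalIntegral.integral_mono_on hab.le
      ((intervalIntegral.intervalIntegrable_rpow' (by linarith)).const_mul _) hw
    intro s hs
    exact mul_le_mul_of_nonneg_right (step3 s hs)
      (Real.rpow_nonneg (lt_of_lt_of_le ha hs.1).le _)
  have step5 : ∫ s in a..b, (K/(b-a))^α * s^(α-1) = (K/(b-a))^α * ((b^α - a^α)/α) := by
    rw [intervalIntegral.integral_const_mul, integral_rpow (Or.inl (by linarith : (-1:ℝ) < α - 1))]
    have h11 : α - 1 + 1 = α := by ring
    rw [h11]
  have e0 : (0:ℝ) ≤ r - 1 := by linarith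
  have e1 : b^α = r^α * a^α := by
    rw [hbdef, Real.mul_rpow (by linarith : (0:ℝ) ≤ r) ha.le]
  have e2 : (b-a)^α = (r-1)^α * a^α := by
    rw [show b - a = (r-1)*a by rw [hbdef]; ring, Real.mul_rpow e0 ha.le]
  have e3 : (K/(b-a))^α = K^α / ((r-1)^α * a^α) := by
    rw [Real.div_rpow hK0 (by linarith : (0:ℝ) ≤ b - a), e2]
  have haα : (0:ℝ) < a^α := Real.rpow_pos_of_pos ha α
  have hr1α : (0:ℝ) < (r-1)^α := Real.rpow_pos_of_pos (by linarith) α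
  have hσ1α : (0:ℝ) < (σ-1)^α := Real.rpow_pos_of_pos (by linarith) α
  have hKα : (0:ℝ) ≤ K^α := Real.rpow_nonneg hK0 α
  have h1r : (1:ℝ) ≤ r^α := by
    calc (1:ℝ) = 1^α := (Real.one_rpow α).symm
      _ ≤ r^α := Real.rpow_le_rpow zero_le_one (by linarith) h0α.le
  have hcomp : (ρ^α - 1)/(α*(σ-1)^α) ≤ (r^α - 1)/(α*(r-1)^α) := by
    apply div_le_div₀ (by linarith)
      (sub_le_sub_right (Real.rpow_le_rpow (by linarith) hρr h0α.le) 1)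
      (by positivity)
      (mul_le_mul_of_nonneg_left (Real.rpow_le_rpow e0 (by linarith) h0α.le) h0α.le)
  calc (ρ^α - 1)/(α * (σ-1)^α) * K^α
      ≤ (r^α - 1)/(α*(r-1)^α) * K^α := mul_le_mul_of_nonneg_right hcomp hKα
    _ = (K/(b-a))^α * ((b^α - a^α)/α) := by
        rw [e3, e1]
        field_simp
    _ ≤ ∫ s in a..b, sInf (ψ '' Ioo (s/σ) (σ*s)) ^ (-α) * s^(α-1) := by
        rw [← step5]; exact step4

end Lemma35Aux

/-- **Lemma 3.5.** Let `0 < α ≤ 1`, `σ > 1`, `ν > 1`. There is a constant `A > 0`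
depending only on `α`, `ν`, `σ` such that for all `M₁, M₂ > 0` with `M₂ ≥ ν M₁` and
every measurable `ψ : (0,∞) → (0,∞)` with `ψ_σ(s) > 0` for all `s > 0` (where
`ψ_σ(s) = inf_{s/σ < ζ < σs} ψ(ζ)`), one has
`(∫_{M₁}^{M₂} ψ_σ(s)^{−α} s^{α−1} ds)^{1/α} ≥ A ∫_{M₁}^{M₂} ds/ψ(s)`. -/
theorem lemma_3_5
    (α σ ν : ℝ) (hα₀ : 0 < α) (hα₁ : α ≤ 1) (hσ : 1 < σ) (hν : 1 < ν) :
    ∃ A : ℝ, 0 < A ∧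
      ∀ M₁ M₂ : ℝ, 0 < M₁ → 0 < M₂ → ν * M₁ ≤ M₂ →
        ∀ ψ : ℝ → ℝ, Measurable ψ → (∀ s : ℝ, 0 < s → 0 < ψ s) →
          (∀ s : ℝ, 0 < s → 0 < sInf (ψ '' Ioo (s / σ) (σ * s))) →
          A * ∫ s in M₁..M₂, (ψ s)⁻¹ ≤
            (∫ s in M₁..M₂, sInf (ψ '' Ioo (s / σ) (σ * s)) ^ (-α) * s ^ (α - 1))
              ^ (1 / α) := by
  classical
  have hlogν : 0 < Real.log ν := Real.log_pos hν
  have hlogσ : 0 < Real.log σ := Real.log_pos hσ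
  set ρ := Real.exp (min (Real.log ν / 2) (Real.log σ / 3)) with hρdef
  have hρ1 : 1 < ρ := by
    rw [hρdef, show (1:ℝ) = Real.exp 0 from (Real.exp_zero).symm]
    exact Real.exp_lt_exp.mpr (lt_min (by linarith) (by linarith))
  have hC : 0 < (ρ^α - 1)/(α * (σ-1)^α) := by
    apply div_pos
    · nlinarith [Real.rpow_lt_rpow (zero_le_one) hρ1 hα₀, Real.one_rpow α]
    · exact mul_pos hα₀ (Real.rpow_pos_of_pos (by linarith) α)
  refine ⟨((ρ^α - 1)/(α * (σ-1)^α))^(1/α), Real.rpow_pos_of_pos hC _, ?_⟩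
  intro M₁ M₂ hM₁ hM₂ hνM ψ hψm hψ hΦ
  have hM12 : M₁ ≤ M₂ := le_trans (by nlinarith) hνM
  have hRHS0 : 0 ≤ ∫ s in M₁..M₂, sInf (ψ '' Ioo (s / σ) (σ * s)) ^ (-α) * s ^ (α - 1) :=
    intervalIntegral.integral_nonneg hM12 (fun u hu =>
      mul_nonneg (Real.rpow_nonneg (Lemma35Aux.inf_nonneg hσ hψ u) _)
        (Real.rpow_nonneg (lt_of_lt_of_le hM₁ hu.1).le _))
  by_cases hint : IntervalIntegrable (fun s => (ψ s)⁻¹) volume M₁ M₂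
  swap
  · rw [intervalIntegral.integral_undef hint, mul_zero]
    exact Real.rpow_nonneg hRHS0 _
  set R := M₂ / M₁ with hRdef
  have hνR : ν ≤ R := (le_div_iff₀ hM₁).mpr hνM
  have hR1 : 1 < R := lt_of_lt_of_le hν hνR
  have hR0 : 0 < R := by linarith
  have hL : 0 < Real.log R := Real.log_pos hR1
  set N : ℕ := ⌈Real.log R / Real.log σ⌉₊ + 1 with hNdef
  have hN2 : 2 ≤ N := by
    have := Nat.ceil_pos.mpr (div_pos hL hlogσ)
    omega
  have hNpos : (0:ℝ) < (N:ℝ) := by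
    have : 0 < N := by omega
    exact_mod_cast this
  set r := Real.exp (Real.log R / N) with hrdef
  have hr1 : 1 < r := by
    rw [hrdef, show (1:ℝ) = Real.exp 0 from (Real.exp_zero).symm]
    exact Real.exp_lt_exp.mpr (div_pos hL hNpos)
  have hrσ : r < σ := by
    have h1 : Real.log R ≤ (⌈Real.log R / Real.log σ⌉₊ : ℝ) * Real.log σ := by
      have h := Nat.le_ceil (Real.log R / Real.log σ)
      calc Real.log R = (Real.log R / Real.log σ) * Real.log σ := by field_simp
        _ ≤ _ := mul_le_mul_of_nonneg_right h hlogσ.le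
    have h2 : Real.log R / N < Real.log σ := by
      rw [div_lt_iff₀ hNpos]
      have hlt : ((⌈Real.log R / Real.log σ⌉₊ : ℝ)) < (N:ℝ) := by
        rw [hNdef]; push_cast; linarith
      nlinarith
    calc r = Real.exp (Real.log R / N) := hrdef
      _ < Real.exp (Real.log σ) := Real.exp_lt_exp.mpr h2
      _ = σ := Real.exp_log (by linarith)
  have hρr : ρ ≤ r := by
    rw [hρdef, hrdef]
    apply Real.exp_le_exp.mpr
    rcases lt_or_ge N 3 with h3 | h3
    · have hN2' : N = 2 := by omega
      refine le_trans (min_le_left _ _) ?_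
      rw [hN2']
      have hlog : Real.log ν ≤ Real.log R := Real.log_le_log (by linarith) hνR
      push_cast
      linarith
    · refine le_trans (min_le_right _ _) ?_
      have hceil : ((N:ℝ) - 2) < Real.log R / Real.log σ := by
        have h1 : (N - 2 : ℕ) < ⌈Real.log R / Real.log σ⌉₊ := by omega
        have h2 := Nat.lt_ceil.mp h1
        have h3' : ((N - 2 : ℕ) : ℝ) = (N:ℝ) - 2 := by
          push_cast [Nat.cast_sub (by omega : 2 ≤ N)]; ring
        rwa [h3'] at h2
      have h2 : ((N:ℝ) - 2) * Real.log σ < Real.log R :=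
        (lt_div_iff₀ hlogσ).mp hceil
      rw [div_le_div_iff₀ (by norm_num) hNpos]
      have hN3 : (3:ℝ) ≤ (N:ℝ) := by exact_mod_cast h3
      nlinarith
  have hrpowN : r ^ (N:ℕ) = R := by
    rw [hrdef, ← Real.exp_nat_mul,
      show (N:ℝ) * (Real.log R / N) = Real.log R by field_simp,
      Real.exp_log hR0]
  set c : ℕ → ℝ := fun k => M₁ * r ^ k with hcdef
  have hc0 : c 0 = M₁ := by simp [hcdef]
  have hcN : c N = M₂ := by
    rw [hcdef]
    show M₁ * r ^ N = M₂
    rw [hrpowN, hRdef]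
    field_simp
  have hcpos : ∀ k, 0 < c k := fun k => by
    rw [hcdef]
    have : (0:ℝ) < r := by linarith
    positivity
  have hcmono : ∀ {k l : ℕ}, k ≤ l → c k ≤ c l := fun {k l} h => by
    rw [hcdef]
    exact mul_le_mul_of_nonneg_left (pow_le_pow_right₀ hr1.le h) hM₁.le
  have hsucc : ∀ k, c (k+1) = r * c k := fun k => by
    rw [hcdef]
    show M₁ * r ^ (k+1) = r * (M₁ * r ^ k)
    ring
  have hsub : ∀ k, k < N → uIcc (c k) (c (k+1)) ⊆ uIcc M₁ M₂ := by
    intro k hk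
    rw [uIcc_of_le hM12, uIcc_of_le (hcmono (Nat.le_succ k))]
    exact Icc_subset_Icc (hc0 ▸ hcmono (Nat.zero_le k)) (hcN ▸ hcmono hk)
  have hintk : ∀ k < N, IntervalIntegrable (fun s => (ψ s)⁻¹) volume (c k) (c (k+1)) :=
    fun k hk => hint.mono_set (hsub k hk)
  have hwk : ∀ k < N, IntervalIntegrable
      (fun s => sInf (ψ '' Ioo (s/σ) (σ*s)) ^ (-α) * s^(α-1)) volume (c k) (c (k+1)) :=
    fun k _hk => Lemma35Aux.integrable_weight hσ hα₀ hα₁ hψm hψ hΦ (hcpos k)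
      (hcmono (Nat.le_succ k))
  have hsum1 := intervalIntegral.sum_integral_adjacent_intervals hintk
  have hsum2 := intervalIntegral.sum_integral_adjacent_intervals hwk
  rw [hc0, hcN] at hsum1 hsum2
  have hKk0 : ∀ k, 0 ≤ ∫ s in c k..c (k+1), (ψ s)⁻¹ := fun k =>
    intervalIntegral.integral_nonneg (hcmono (Nat.le_succ k)) (fun u hu =>
      inv_nonneg.mpr (hψ u (lt_of_lt_of_le (hcpos k) hu.1)).le)
  have hchunk : ∀ k < N, (ρ^α - 1)/(α * (σ-1)^α) * (∫ s in c k..c (k+1), (ψ s)⁻¹)^α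
      ≤ ∫ s in c k..c (k+1), sInf (ψ '' Ioo (s/σ) (σ*s)) ^ (-α) * s^(α-1) := by
    intro k hk
    have h := Lemma35Aux.chunk hσ hα₀ hα₁ hψm hψ hΦ (hcpos k) hρ1 hρr hrσ
      ((hsucc k) ▸ hintk k hk)
    rwa [← hsucc k] at h
  set Kt := ∫ s in M₁..M₂, (ψ s)⁻¹ with hKt
  have hKt0 : 0 ≤ Kt := intervalIntegral.integral_nonneg hM12 (fun u hu =>
    inv_nonneg.mpr (hψ u (lt_of_lt_of_le hM₁ hu.1)).le)
  have hsuper : Kt ^ α ≤ ∑ k ∈ Finset.range N, (∫ s in c k..c (k+1), (ψ s)⁻¹)^α := by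
    calc Kt^α = (∑ k ∈ Finset.range N, ∫ s in c k..c (k+1), (ψ s)⁻¹)^α := by rw [hsum1]
      _ ≤ _ := Lemma35Aux.sum_rpow_le hα₀ hα₁ N _ hKk0
  have hBB : (ρ^α - 1)/(α * (σ-1)^α) * Kt^α
      ≤ ∫ s in M₁..M₂, sInf (ψ '' Ioo (s/σ) (σ*s)) ^ (-α) * s^(α-1) := by
    calc (ρ^α - 1)/(α * (σ-1)^α) * Kt^α
        ≤ (ρ^α - 1)/(α * (σ-1)^α) *
            ∑ k ∈ Finset.range N, (∫ s in c k..c (k+1), (ψ s)⁻¹)^α :=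
          mul_le_mul_of_nonneg_left hsuper hC.le
      _ = ∑ k ∈ Finset.range N,
            (ρ^α - 1)/(α * (σ-1)^α) * (∫ s in c k..c (k+1), (ψ s)⁻¹)^α :=
          Finset.mul_sum _ _ _
      _ ≤ ∑ k ∈ Finset.range N,
            ∫ s in c k..c (k+1), sInf (ψ '' Ioo (s/σ) (σ*s)) ^ (-α) * s^(α-1) :=
          Finset.sum_le_sum (fun k hk => hchunk k (Finset.mem_range.mp hk))
      _ = _ := hsum2
  have hKtpow : (Kt^α)^(1/α) = Kt := by
    rw [← Real.rpow_mul hKt0, mul_one_div_cancel hα₀.ne', Real.rpow_one]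
  have hfin : (((ρ^α - 1)/(α * (σ-1)^α)) * Kt^α)^(1/α)
      = ((ρ^α - 1)/(α * (σ-1)^α))^(1/α) * Kt := by
    rw [Real.mul_rpow hC.le (Real.rpow_nonneg hKt0 α), hKtpow]
  rw [← hfin]
  exact Real.rpow_le_rpow (by positivity) hBB (by positivity)

end
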